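/- Let Φ = {φ_1, …, φ_J} be a self-similar system on ℝ^d with attractor F and convex hull K = [F], and suppose Φ satisfies the tileset condition. Then the following are equivalent: (i) ∂K ⊆ F; (ii) ∂T = F, where T = int K \ F. -/

import Mathlib

open MeasureTheory Set Filter Topology

lemma aux_sum_pad {m n : ℕ} (hmn : m ≤ n) {β : Type*} [AddCommMonoid β] (g : Fin m → β) :
    (∑ k : Fin n, if h : (k : ℕ) < m then g ⟨k, h⟩ else 0) = ∑ i, g i := by
  have h1 : (∑ k : Fin n, if h : (k : ℕ) < m then g ⟨k, h⟩ else 0)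
      = ∑ k ∈ Finset.univ.map (Fin.castLEEmb hmn),
          (if h : (k : ℕ) < m then g ⟨k, h⟩ else 0) := by
    refine (Finset.sum_subset (Finset.subset_univ _) ?_).symm
    intro k _ hk
    rw [dif_neg]
    intro hlt
    exact hk (Finset.mem_map.mpr ⟨⟨(k : ℕ), hlt⟩, Finset.mem_univ _, by
      ext; simp⟩)
  rw [h1, Finset.sum_map]
  refine Finset.sum_congr rfl fun i _ => ?_
  rw [dif_pos (by simpa using i.isLt)]
  exact congrArg g (Fin.ext (by simp))


/-- The convex hull of a nonempty compact set in a finite-dimensional normed space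
is compact. -/
lemma aux_isCompact_convexHull {E : Type*} [NormedAddCommGroup E] [NormedSpace ℝ E]
    [FiniteDimensional ℝ E] {s : Set E} (hne : s.Nonempty) (hs : IsCompact s) :
    IsCompact (convexHull ℝ s) := by
  classical
  set n := Module.finrank ℝ E + 1 with hn
  obtain ⟨x₀, hx₀⟩ := hne
  have key : convexHull ℝ s =
      (fun p : (Fin n → ℝ) × (Fin n → E) => ∑ i, p.1 i • p.2 i) ''
        (stdSimplex ℝ (Fin n) ×ˢ Set.univ.pi fun _ => s) := by
    apply Subset.antisymm
    · intro x hx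
      obtain ⟨ι, hι, z, w, hzs, hzi, hw0, hw1, hwz⟩ := eq_pos_convex_span_of_mem_convexHull hx
      have hcard : Fintype.card ι ≤ n := by
        have h1 := hzi.card_le_finrank_succ
        have h2 : Module.finrank ℝ (vectorSpan ℝ (Set.range z)) ≤ Module.finrank ℝ E :=
          Submodule.finrank_le _
        omega
      obtain ⟨m, hmcard, ⟨e⟩⟩ : ∃ m : ℕ, Fintype.card ι = m ∧ Nonempty (ι ≃ Fin m) :=
        ⟨Fintype.card ι, rfl, ⟨Fintype.equivFin ι⟩⟩
      have hmn : m ≤ n := hmcard ▸ hcard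
      set w' : Fin n → ℝ := fun k => if h : (k : ℕ) < m then w (e.symm ⟨k, h⟩) else 0 with hw'
      set z' : Fin n → E := fun k => if h : (k : ℕ) < m then z (e.symm ⟨k, h⟩) else x₀ with hz'
      refine ⟨⟨w', z'⟩, ⟨?_, ?_⟩, ?_⟩
      · constructor
        · intro k
          by_cases h : (k : ℕ) < m
          · simp only [hw', dif_pos h]
            exact (hw0 _).le
          · simp only [hw', dif_neg h, le_refl]
        · have : (∑ k : Fin n, w' k) = ∑ i : Fin m, w (e.symm i) := by
            simpa [hw'] using aux_sum_pad hmn (g := fun i => w (e.symm i))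
          rw [this, Equiv.sum_comp e.symm w, hw1]
      · intro k _
        by_cases h : (k : ℕ) < m
        · simp only [hz', dif_pos h]
          exact hzs ⟨_, rfl⟩
        · simp only [hz', dif_neg h]
          exact hx₀
      · have h2 : (∑ k : Fin n, w' k • z' k)
            = ∑ i : Fin m, w (e.symm i) • z (e.symm i) := by
          have h3 : ∀ k : Fin n, w' k • z' k
              = if h : (k : ℕ) < m then w (e.symm ⟨k, h⟩) • z (e.symm ⟨k, h⟩) else 0 := by
            intro k
            by_cases h : (k : ℕ) < m
            · simp [hw', hz', dif_pos h]
            · simp [hw', hz', dif_neg h]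
          calc (∑ k : Fin n, w' k • z' k)
              = ∑ k : Fin n, (if h : (k : ℕ) < m then
                  w (e.symm ⟨k, h⟩) • z (e.symm ⟨k, h⟩) else 0) :=
                Finset.sum_congr rfl fun k _ => h3 k
            _ = ∑ i : Fin m, w (e.symm i) • z (e.symm i) :=
                aux_sum_pad hmn (g := fun i => w (e.symm i) • z (e.symm i))
        simp only [h2]
        rw [Equiv.sum_comp e.symm (fun i => w i • z i)]
        exact hwz
    · rintro x ⟨⟨w, g⟩, ⟨hw, hg⟩, rfl⟩
      exact (convex_convexHull ℝ s).sum_mem (fun i _ => hw.1 i) hw.2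
        (fun i _ => subset_convexHull ℝ s (hg i (Set.mem_univ i)))
  rw [key]
  refine IsCompact.image ?_ ?_
  · exact (isCompact_stdSimplex (𝕜 := ℝ) (ι := Fin n)).prod (isCompact_univ_pi fun _ => hs)
  · exact continuous_finset_sum _ fun i _ =>
      ((continuous_apply i).comp continuous_fst).smul ((continuous_apply i).comp continuous_snd)

/-- Let `Φ = {φ_1, …, φ_J}` be a self-similar system on `ℝ^d` with
attractor `F` and convex hull `K = [F]`, satisfying the tileset condition.  Then
the following are equivalent: (i) `∂K ⊆ F`; (ii) `∂T = F`, where `T = int K \ F`. -/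
theorem stmt_17 (d J : ℕ) (hd : 1 ≤ d) (hJ : 2 ≤ J)
    (r : Fin J → ℝ) (hr : ∀ j, r j ∈ Set.Ioo (0 : ℝ) 1)
    (A : Fin J → (EuclideanSpace ℝ (Fin d) ≃ₗᵢ[ℝ] EuclideanSpace ℝ (Fin d)))
    (a : Fin J → EuclideanSpace ℝ (Fin d))
    (φ : Fin J → EuclideanSpace ℝ (Fin d) → EuclideanSpace ℝ (Fin d))
    (hφ : ∀ j x, φ j x = r j • (A j x) + a j)
    (F : Set (EuclideanSpace ℝ (Fin d)))
    (hFne : F.Nonempty) (hFc : IsCompact F) (hF : F = ⋃ j, φ j '' F)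
    (K : Set (EuclideanSpace ℝ (Fin d))) (hK : K = convexHull ℝ F)
    (htile1 : ¬ interior K ⊆ ⋃ j, φ j '' K)
    (htile2 : ∀ j ℓ, j ≠ ℓ → interior (φ j '' K) ∩ interior (φ ℓ '' K) = ∅) :
    frontier K ⊆ F ↔ frontier (interior K \ F) = F := by
  classical
  -- basic facts
  have hFK : F ⊆ K := hK ▸ subset_convexHull ℝ F
  have hKconv : Convex ℝ K := hK ▸ convex_convexHull ℝ F
  have hKc : IsCompact K := hK ▸ aux_isCompact_convexHull hFne hFc
  have hKcl : IsClosed K := hKc.isClosed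
  have hFcl : IsClosed F := hFc.isClosed
  have hintK : (interior K).Nonempty := by
    rcases Set.not_subset.mp htile1 with ⟨x, hx, -⟩
    exact ⟨x, hx⟩
  have hφcont : ∀ j, Continuous (φ j) := by
    intro j
    have h : (φ j) = fun x => r j • (A j x) + a j := funext (hφ j)
    rw [h]; fun_prop
  -- φ j as an affine map
  have hφaff : ∀ j, ∃ f : EuclideanSpace ℝ (Fin d) →ᵃ[ℝ] EuclideanSpace ℝ (Fin d),
      ⇑f = φ j := by
    intro j
    refine ⟨⟨φ j, r j • ((A j).toLinearEquiv : EuclideanSpace ℝ (Fin d) →ₗ[ℝ]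
      EuclideanSpace ℝ (Fin d)), ?_⟩, rfl⟩
    intro p v
    simp only [hφ, vadd_eq_add, LinearMap.smul_apply, LinearMap.coe_coe,
      LinearEquiv.coe_coe, LinearIsometryEquiv.coe_toLinearEquiv, map_add, smul_add]
    abel
  have hφK_conv : ∀ j, Convex ℝ (φ j '' K) := by
    intro j
    rcases hφaff j with ⟨f, hf⟩
    rw [← hf]; exact hKconv.affine_image f
  have hφK_sub : ∀ j, φ j '' K ⊆ K := by
    intro j
    rcases hφaff j with ⟨f, hf⟩
    rw [← hf, hK, AffineMap.image_convexHull]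
    refine convexHull_mono ?_
    rw [hf]
    calc φ j '' F ⊆ ⋃ i, φ i '' F := Set.subset_iUnion (fun i => φ i '' F) j
      _ = F := hF.symm
  -- measure of images
  have himg : ∀ (j : Fin J) (s : Set (EuclideanSpace ℝ (Fin d))),
      NullMeasurableSet s volume →
      volume (φ j '' s) = ENNReal.ofReal (r j ^ d) * volume s := by
    intro j s hs
    have h1 : (A j) '' s = (A j).symm ⁻¹' s := by
      ext y
      constructor
      · rintro ⟨x, hx, rfl⟩; simpa using hx
      · intro hy; exact ⟨(A j).symm y, hy, by simp⟩
    have hAs : volume ((A j) '' s) = volume s := by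
      rw [h1]; exact (A j).symm.measurePreserving.measure_preimage hs
    have hcomp : φ j = (fun x => a j + x) ∘ (fun x : EuclideanSpace ℝ (Fin d) => r j • x)
        ∘ (A j) := by
      funext x; simp [hφ, add_comm]
    rw [hcomp, Set.image_comp, Set.image_comp, Set.image_add_left, measure_preimage_add,
      Set.image_smul, Measure.addHaar_smul_of_nonneg (volume : Measure (EuclideanSpace ℝ (Fin d))) (le_of_lt (hr j).1),
      finrank_euclideanSpace_fin, hAs]
  have hKnm : NullMeasurableSet K volume := hKcl.measurableSet.nullMeasurableSet
  have hFnm : NullMeasurableSet F volume := hFcl.measurableSet.nullMeasurableSet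
  -- the contraction ratio sum
  set c : ENNReal := ∑ j, ENNReal.ofReal (r j ^ d) with hc_def
  have hμKne : volume K ≠ 0 := (Measure.measure_pos_of_nonempty_interior volume hintK).ne'
  have hμKtop : volume K ≠ ⊤ := hKc.measure_lt_top.ne
  -- sum of the measures of the pieces
  have hsum : volume (⋃ j, φ j '' K) = c * volume K := by
    have hnull : ∀ j : Fin J, NullMeasurableSet (φ j '' K) volume :=
      fun j => (hφK_conv j).nullMeasurableSet volume
    have hdisj : Pairwise (Function.onFun (AEDisjoint volume) fun j => φ j '' K) := by
      intro j ℓ hjl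
      have hsub : (φ j '' K) ∩ (φ ℓ '' K) ⊆
          frontier (φ j '' K) ∪ frontier (φ ℓ '' K) := by
        rintro x ⟨hxj, hxl⟩
        by_cases hji : x ∈ interior (φ j '' K)
        · have hli : x ∉ interior (φ ℓ '' K) := by
            intro h
            have h2 := htile2 j ℓ hjl
            have : x ∈ interior (φ j '' K) ∩ interior (φ ℓ '' K) := ⟨hji, h⟩
            rw [h2] at this
            exact this
          exact Or.inr ⟨subset_closure hxl, hli⟩
        · exact Or.inl ⟨subset_closure hxj, hji⟩
      exact measure_mono_null hsub
        (measure_union_null ((hφK_conv j).addHaar_frontier volume)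
          ((hφK_conv ℓ).addHaar_frontier volume))
    rw [measure_iUnion₀ hdisj hnull, tsum_fintype]
    rw [Finset.sum_congr rfl fun j _ => himg j K hKnm, ← Finset.sum_mul]
  -- strict inequality coming from the tileset condition
  have hΦK_sub : (⋃ j, φ j '' K) ⊆ K := Set.iUnion_subset hφK_sub
  have hΦclosed : IsClosed (⋃ j, φ j '' K) :=
    isClosed_iUnion_of_finite fun j => ((hKc.image (hφcont j)).isClosed)
  obtain ⟨x₀, hx₀int, hx₀Φ⟩ := Set.not_subset.mp htile1
  have hUopen : IsOpen (interior K \ ⋃ j, φ j '' K) := isOpen_interior.sdiff hΦclosed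
  have hUpos : volume (interior K \ ⋃ j, φ j '' K) ≠ 0 :=
    (hUopen.measure_pos volume ⟨x₀, hx₀int, hx₀Φ⟩).ne'
  have hlt : volume (⋃ j, φ j '' K) < volume K := by
    have hdisjU : Disjoint (⋃ j, φ j '' K) (interior K \ ⋃ j, φ j '' K) :=
      Set.disjoint_sdiff_right
    have hsum2 : volume ((⋃ j, φ j '' K) ∪ (interior K \ ⋃ j, φ j '' K))
        = volume (⋃ j, φ j '' K) + volume (interior K \ ⋃ j, φ j '' K) :=
      measure_union hdisjU hUopen.measurableSet
    have hle : ((⋃ j, φ j '' K) ∪ (interior K \ ⋃ j, φ j '' K)) ⊆ K :=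
      Set.union_subset hΦK_sub ((Set.diff_subset).trans interior_subset)
    calc volume (⋃ j, φ j '' K)
        < volume (⋃ j, φ j '' K) + volume (interior K \ ⋃ j, φ j '' K) :=
          ENNReal.lt_add_right ((measure_mono hΦK_sub).trans_lt hKc.measure_lt_top).ne hUpos
      _ = volume ((⋃ j, φ j '' K) ∪ (interior K \ ⋃ j, φ j '' K)) := hsum2.symm
      _ ≤ volume K := measure_mono hle
  have hc1 : c < 1 := by
    rw [hsum] at hlt
    refine (ENNReal.mul_lt_mul_iff_left hμKne hμKtop).mp ?_
    rwa [one_mul]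
  -- F has measure zero
  have hμF : volume F = 0 := by
    have h1 : volume F ≤ c * volume F := by
      conv_lhs => rw [hF]
      refine le_trans (measure_iUnion_le _) ?_
      rw [tsum_fintype, Finset.sum_congr rfl fun j _ => himg j F hFnm, ← Finset.sum_mul]
    by_contra h0
    have h2 : c * volume F < 1 * volume F :=
      (ENNReal.mul_lt_mul_iff_left h0 hFc.measure_lt_top.ne).mpr hc1
    rw [one_mul] at h2
    exact absurd (h1.trans_lt h2) (lt_irrefl _)
  -- hence F has empty interior
  have hFint : interior F = ∅ := by
    by_contra h
    obtain ⟨x, hx⟩ := Set.nonempty_iff_ne_empty.mpr h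
    have h1 : (0 : ENNReal) < volume (interior F) := isOpen_interior.measure_pos volume ⟨x, hx⟩
    have h2 : volume (interior F) ≤ volume F := measure_mono interior_subset
    rw [hμF] at h2
    exact absurd (h1.trans_le h2) (lt_irrefl 0)
  -- topology: K is the closure of its interior
  have hKclosureInt : K ⊆ closure (interior K) := by
    intro x hx
    obtain ⟨y, hy⟩ := hintK
    set f : ℝ → EuclideanSpace ℝ (Fin d) := fun t => t • y + (1 - t) • x with hfdef
    have hfc : Continuous f := by fun_prop
    have hmem : ∀ t : ℝ, 0 < t → t ≤ 1 → f t ∈ interior K := by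
      intro t ht ht1
      exact hKconv.combo_interior_closure_mem_interior hy (subset_closure hx) ht
        (by linarith) (by ring)
    have htend : Tendsto (fun n : ℕ => f (1 / (n + 1 : ℝ))) atTop (𝓝 (f 0)) :=
      (hfc.tendsto 0).comp tendsto_one_div_add_atTop_nhds_zero_nat
    have hf0 : f 0 = x := by simp [hfdef]
    rw [hf0] at htend
    refine mem_closure_of_tendsto htend (Filter.Eventually.of_forall fun n => ?_)
    refine hmem _ (by positivity) ?_
    rw [div_le_one (by positivity)]
    have : (0 : ℝ) ≤ n := Nat.cast_nonneg n
    linarith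
  -- density of T = interior K \ F in K
  have hdense : K ⊆ closure (interior K \ F) := by
    intro x hx
    rw [mem_closure_iff]
    intro o ho hxo
    have h1 : (o ∩ interior K).Nonempty := by
      have := hKclosureInt hx
      rw [mem_closure_iff] at this
      exact this o ho hxo
    obtain ⟨y, hyo, hyint⟩ := h1
    have h2 : ¬(o ∩ interior K ⊆ F) := by
      intro hsub
      have h3 : o ∩ interior K ⊆ interior F :=
        interior_maximal hsub (ho.inter isOpen_interior)
      rw [hFint] at h3
      exact h3 ⟨hyo, hyint⟩
    obtain ⟨z, hz, hzF⟩ := Set.not_subset.mp h2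
    exact ⟨z, hz.1, hz.2, hzF⟩
  -- closure of T equals K
  have hclT : closure (interior K \ F) = K := by
    apply Subset.antisymm
    · exact closure_minimal ((Set.diff_subset).trans interior_subset) hKcl
    · exact hdense
  have hTopen : IsOpen (interior K \ F) := isOpen_interior.sdiff hFcl
  -- the frontier of T
  have hfr : frontier (interior K \ F) = F ∪ frontier K := by
    rw [frontier, hTopen.interior_eq, hclT]
    have hfrK : frontier K = K \ interior K := by
      rw [frontier, hKcl.closure_eq]
    rw [hfrK]
    ext x
    simp only [Set.mem_diff, Set.mem_union, not_and, not_not]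
    constructor
    · rintro ⟨hxK, h⟩
      by_cases hxF : x ∈ F
      · exact Or.inl hxF
      · refine Or.inr ⟨hxK, fun hint => hxF (h hint)⟩
    · rintro (hxF | ⟨hxK, hxint⟩)
      · exact ⟨hFK hxF, fun _ => hxF⟩
      · exact ⟨hxK, fun h => absurd h hxint⟩
  -- conclude
  constructor
  · intro h
    rw [hfr, Set.union_eq_self_of_subset_right h]
  · intro h
    have h2 : frontier K ⊆ frontier (interior K \ F) := by
      rw [hfr]; exact Set.subset_union_right
    rwa [h] at h2
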